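/- Let 1 ≤ n ≤ m and let U = (u_{ij}) be an m×m unitary matrix. Write the polynomial ∏_{i=1}^n (u_{i1}x₁ + ⋯ + u_{im}x_m) as ∑_S a_S x^S, the sum ranging over monomials x^S = x₁^{s₁}⋯x_m^{s_m} with s₁+⋯+s_m = n. Then ∑_S |a_S|²·s₁!⋯s_m! = 1; equivalently, ⟨U[x₁⋯x_n], U[x₁⋯x_n]⟩ = 1 where ⟨·,·⟩ is the Fock inner product. -/

import Mathlib

open MvPolynomial Finset

variable {n m : ℕ}

lemma prod_monomial' {σ : Type*} {R : Type*} [CommSemiring R] {α : Type*} (s : Finset α)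
    (f : α → (σ →₀ ℕ)) (a : α → R) :
    ∏ i ∈ s, MvPolynomial.monomial (f i) (a i) =
      MvPolynomial.monomial (∑ i ∈ s, f i) (∏ i ∈ s, a i) := by
  induction s using Finset.cons_induction with
  | empty => simp
  | cons x s hx ih =>
      rw [Finset.prod_cons, Finset.sum_cons, Finset.prod_cons, ih, MvPolynomial.monomial_mul]

lemma Sf_apply (f : Fin n → Fin m) (j : Fin m) :
    (∑ i, Finsupp.single (f i) 1 : Fin m →₀ ℕ) j = Fintype.card {i // f i = j} := by
  rw [Finsupp.finset_sum_apply, Fintype.card_subtype, Finset.card_filter]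
  refine Finset.sum_congr rfl fun i _ => ?_
  rw [Finsupp.single_apply]

/-- Permutations intertwining `f` and `g` correspond to families of fiber bijections. -/
def fiberPermEquiv (f g : Fin n → Fin m) :
    {σ : Equiv.Perm (Fin n) // g ∘ σ = f} ≃ ∀ j : Fin m, ({i // f i = j} ≃ {i // g i = j}) where
  toFun := fun ⟨σ, hσ⟩ j =>
    { toFun := fun ⟨i, hi⟩ => ⟨σ i, by rw [show g (σ i) = f i from congrFun hσ i, hi]⟩
      invFun := fun ⟨i, hi⟩ => ⟨σ.symm i, by
        have := congrFun hσ (σ.symm i); simp only [Function.comp_apply, Equiv.apply_symm_apply] at this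
        rw [← this, hi]⟩
      left_inv := fun ⟨i, hi⟩ => by simp
      right_inv := fun ⟨i, hi⟩ => by simp }
  invFun := fun e =>
    ⟨{ toFun := fun i => (e (f i) ⟨i, rfl⟩).1
       invFun := fun i => ((e (g i)).symm ⟨i, rfl⟩).1
       left_inv := fun i => by
         set a := e (f i) ⟨i, rfl⟩ with ha
         have h2 : g a.1 = f i := a.2
         show ((e (g a.1)).symm ⟨a.1, rfl⟩).1 = i
         have key : ∀ (j : Fin m) (h : g a.1 = j), ((e j).symm ⟨a.1, h⟩).1 =
             ((e (g a.1)).symm ⟨a.1, rfl⟩).1 := by rintro j rfl; rfl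
         rw [← key (f i) h2]
         have : (⟨a.1, h2⟩ : {i' // g i' = f i}) = e (f i) ⟨i, rfl⟩ := Subtype.ext rfl
         rw [this, Equiv.symm_apply_apply]
       right_inv := fun i => by
         set a := (e (g i)).symm ⟨i, rfl⟩ with ha
         have h2 : f a.1 = g i := a.2
         show (e (f a.1) ⟨a.1, rfl⟩).1 = i
         have key : ∀ (j : Fin m) (h : f a.1 = j), ((e j) ⟨a.1, h⟩).1 =
             ((e (f a.1)) ⟨a.1, rfl⟩).1 := by rintro j rfl; rfl
         rw [← key (g i) h2]
         have : (⟨a.1, h2⟩ : {i' // f i' = g i}) = (e (g i)).symm ⟨i, rfl⟩ := Subtype.ext rfl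
         rw [this, Equiv.apply_symm_apply] },
     funext fun i => (e (f i) ⟨i, rfl⟩).2⟩
  left_inv := fun ⟨σ, hσ⟩ => Subtype.ext (Equiv.ext fun i => rfl)
  right_inv := fun e => funext fun j => Equiv.ext fun ⟨i, hi⟩ => Subtype.ext (by cases hi; rfl)

lemma card_perm_comp (f g : Fin n → Fin m) :
    Fintype.card {σ : Equiv.Perm (Fin n) // g ∘ σ = f} =
      if (∑ i, Finsupp.single (f i) 1 : Fin m →₀ ℕ) = ∑ i, Finsupp.single (g i) 1
      then ∏ j, ((∑ i, Finsupp.single (f i) 1 : Fin m →₀ ℕ) j).factorial else 0 := by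
  rw [Fintype.card_congr (fiberPermEquiv f g), Fintype.card_pi]
  by_cases h : (∑ i, Finsupp.single (f i) 1 : Fin m →₀ ℕ) = ∑ i, Finsupp.single (g i) 1
  · rw [if_pos h]
    refine Finset.prod_congr rfl fun j _ => ?_
    have hc : Fintype.card {i // f i = j} = Fintype.card {i // g i = j} := by
      rw [← Sf_apply, ← Sf_apply, h]
    rw [Fintype.card_equiv (Fintype.equivOfCardEq hc), Sf_apply, hc]
  · rw [if_neg h]
    have : ∃ j, Fintype.card {i // f i = j} ≠ Fintype.card {i // g i = j} := by
      by_contra hall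
      push_neg at hall
      exact h (Finsupp.ext fun j => by rw [Sf_apply, Sf_apply, hall])
    obtain ⟨j, hj⟩ := this
    apply Finset.prod_eq_zero (Finset.mem_univ j)
    have : IsEmpty ({i // f i = j} ≃ {i // g i = j}) := ⟨fun e => hj (Fintype.card_congr e)⟩
    exact Fintype.card_eq_zero

/-- The Fock inner product of two polynomials `p = ∑_S a_S x^S`, `q = ∑_S b_S x^S` in `m`
complex variables: `⟨p,q⟩ := ∑_S conj(a_S)·b_S·s₁!⋯s_m!`. -/
noncomputable def fock {m : ℕ} (p q : MvPolynomial (Fin m) ℂ) : ℂ :=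
  ∑ S ∈ p.support ∪ q.support,
    (starRingEnd ℂ) (MvPolynomial.coeff S p) * MvPolynomial.coeff S q *
      ∏ i, ((S i).factorial : ℂ)

/-- `L[p]`: the polynomial `p(Lx)`, obtained by substituting `x_i ↦ ∑_j L_{ij} x_j` in `p`. -/
noncomputable def substL {m : ℕ} (L : Matrix (Fin m) (Fin m) ℂ)
    (p : MvPolynomial (Fin m) ℂ) : MvPolynomial (Fin m) ℂ :=
  MvPolynomial.aeval (fun i => ∑ j, MvPolynomial.C (L i j) * MvPolynomial.X j) p

theorem fock_norm_substL_one (m n : ℕ) (hn : 1 ≤ n) (hnm : n ≤ m)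
    (U : Matrix (Fin m) (Fin m) ℂ) (hU : U ∈ Matrix.unitaryGroup (Fin m) ℂ) :
    fock (substL U (∏ i : Fin n, MvPolynomial.X (Fin.castLE hnm i)))
      (substL U (∏ i : Fin n, MvPolynomial.X (Fin.castLE hnm i))) = 1 := by
  classical
  set c : Fin n → Fin m := Fin.castLE hnm with hc
  set w : (Fin n → Fin m) → ℂ := fun f => ∏ i, U (c i) (f i) with hw
  set Sf : (Fin n → Fin m) → (Fin m →₀ ℕ) := fun f => ∑ i, Finsupp.single (f i) 1 with hSf
  set p := substL U (∏ i : Fin n, MvPolynomial.X (c i)) with hp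
  -- Step 1: expansion of p
  have hp1 : p = ∑ f : Fin n → Fin m, MvPolynomial.monomial (Sf f) (w f) := by
    rw [hp, substL, map_prod]
    simp only [MvPolynomial.aeval_X]
    rw [Fintype.prod_sum (fun (i : Fin n) (j : Fin m) =>
      MvPolynomial.C (U (c i) j) * MvPolynomial.X j)]
    refine Finset.sum_congr rfl fun f _ => ?_
    simp only [MvPolynomial.C_mul_X_eq_monomial]
    rw [prod_monomial']
  have hcoeff : ∀ S, MvPolynomial.coeff S p
      = ∑ f : Fin n → Fin m, if Sf f = S then w f else 0 := by
    intro S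
    rw [hp1, MvPolynomial.coeff_sum]
    exact Finset.sum_congr rfl fun f _ => MvPolynomial.coeff_monomial S (Sf f) (w f)
  -- Step 2: fock as sum over T
  set T : Finset (Fin m →₀ ℕ) := Finset.image Sf Finset.univ with hT
  have hsub : p.support ∪ p.support ⊆ T := by
    rw [Finset.union_self]
    intro S hS
    rw [MvPolynomial.mem_support_iff] at hS
    by_contra hST
    apply hS
    rw [hcoeff]
    refine Finset.sum_eq_zero fun f _ => ?_
    rw [if_neg]
    intro hf
    exact hST (by rw [hT]; exact Finset.mem_image.2 ⟨f, Finset.mem_univ f, hf⟩)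
  have hfock : fock p p = ∑ S ∈ T, (starRingEnd ℂ) (MvPolynomial.coeff S p)
      * MvPolynomial.coeff S p * ∏ i, ((S i).factorial : ℂ) := by
    rw [fock]
    refine Finset.sum_subset hsub fun S _ hS => ?_
    have h0 : MvPolynomial.coeff S p = 0 := by
      rw [← MvPolynomial.notMem_support_iff]
      intro h; exact hS (Finset.mem_union_left _ h)
    rw [h0, map_zero, zero_mul, zero_mul]
  -- Step 3: double sum over f, g
  have step3 : fock p p = ∑ f : Fin n → Fin m, ∑ g : Fin n → Fin m,
      (if Sf g = Sf f then (starRingEnd ℂ) (w f) * w g * ∏ j, ((Sf f j).factorial : ℂ)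
        else 0) := by
    rw [hfock]
    have e1 : ∀ S ∈ T, (starRingEnd ℂ) (MvPolynomial.coeff S p) * MvPolynomial.coeff S p
        * ∏ i, ((S i).factorial : ℂ)
        = ∑ f : Fin n → Fin m, ∑ g : Fin n → Fin m,
            (if Sf f = S then (starRingEnd ℂ) (w f) else 0) * (if Sf g = S then w g else 0)
              * ∏ j, ((S j).factorial : ℂ) := by
      intro S _
      rw [hcoeff S, map_sum]
      simp only [apply_ite (starRingEnd ℂ), map_zero]
      rw [Finset.sum_mul_sum, Finset.sum_mul]
      exact Finset.sum_congr rfl fun f _ => by rw [Finset.sum_mul]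
    rw [Finset.sum_congr rfl e1, Finset.sum_comm]
    refine Finset.sum_congr rfl fun f _ => ?_
    rw [Finset.sum_comm]
    refine Finset.sum_congr rfl fun g _ => ?_
    rw [Finset.sum_eq_single (Sf f)]
    · rw [if_pos rfl]
      split_ifs <;> simp
    · intro S _ hS
      rw [if_neg (Ne.symm hS), zero_mul, zero_mul]
    · intro habs
      exact absurd (Finset.mem_image.2 ⟨f, Finset.mem_univ f, rfl⟩) habs
  -- Step 4: counting permutations
  have count : ∀ f g : Fin n → Fin m,
      (if Sf g = Sf f then (starRingEnd ℂ) (w f) * w g * ∏ j, ((Sf f j).factorial : ℂ) else 0)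
      = ∑ σ : Equiv.Perm (Fin n), if g ∘ σ = f then (starRingEnd ℂ) (w f) * w g else 0 := by
    intro f g
    have h1 : (∑ σ : Equiv.Perm (Fin n), if g ∘ σ = f then (starRingEnd ℂ) (w f) * w g else 0)
        = (Fintype.card {σ : Equiv.Perm (Fin n) // g ∘ σ = f} : ℂ)
          * ((starRingEnd ℂ) (w f) * w g) := by
      rw [Fintype.card_subtype, Finset.sum_ite, Finset.sum_const, Finset.sum_const_zero,
        add_zero, nsmul_eq_mul]
    rw [h1, card_perm_comp f g]
    by_cases h : Sf f = Sf g
    · rw [if_pos h, if_pos h.symm, Nat.cast_prod]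
      ring
    · rw [if_neg h, if_neg fun hh => h hh.symm, Nat.cast_zero, zero_mul]
  -- Step 5: reorganize and use unitarity
  have step5 : fock p p = ∑ σ : Equiv.Perm (Fin n), ∑ g : Fin n → Fin m,
      (starRingEnd ℂ) (w (g ∘ σ)) * w g := by
    rw [step3, Finset.sum_congr rfl fun f _ => Finset.sum_congr rfl fun g _ => count f g,
      Finset.sum_comm]
    conv_rhs => rw [Finset.sum_comm]
    refine Finset.sum_congr rfl fun g _ => ?_
    rw [Finset.sum_comm]
    refine Finset.sum_congr rfl fun σ _ => ?_
    rw [Finset.sum_eq_single (g ∘ σ)]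
    · rw [if_pos rfl]
    · intro f _ hf; rw [if_neg (Ne.symm hf)]
    · intro habs; exact absurd (Finset.mem_univ _) habs
  have key : ∀ σ : Equiv.Perm (Fin n),
      (∑ g : Fin n → Fin m, (starRingEnd ℂ) (w (g ∘ σ)) * w g)
        = if σ = 1 then 1 else 0 := by
    intro σ
    have h1 : ∀ g : Fin n → Fin m, (starRingEnd ℂ) (w (g ∘ σ)) * w g
        = ∏ i, ((starRingEnd ℂ) (U (c (σ.symm i)) (g i)) * U (c i) (g i)) := by
      intro g
      have h2 : (starRingEnd ℂ) (w (g ∘ σ))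
          = ∏ i, (starRingEnd ℂ) (U (c (σ.symm i)) (g i)) := by
        rw [hw, map_prod]
        rw [← Equiv.prod_comp σ (fun i => (starRingEnd ℂ) (U (c (σ.symm i)) (g i)))]
        exact Finset.prod_congr rfl fun i _ => by rw [Equiv.symm_apply_apply]; rfl
      rw [h2, hw, ← Finset.prod_mul_distrib]
    rw [Finset.sum_congr rfl fun g _ => h1 g,
      ← Fintype.prod_sum fun (i : Fin n) (k : Fin m) =>
        (starRingEnd ℂ) (U (c (σ.symm i)) k) * U (c i) k]
    have h2 : ∀ i : Fin n, (∑ k, (starRingEnd ℂ) (U (c (σ.symm i)) k) * U (c i) k)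
        = if c i = c (σ.symm i) then 1 else 0 := by
      intro i
      have hU1 : U * star U = 1 := Matrix.mem_unitaryGroup_iff.mp hU
      have h3 : (U * star U) (c i) (c (σ.symm i))
          = (1 : Matrix (Fin m) (Fin m) ℂ) (c i) (c (σ.symm i)) := by rw [hU1]
      rw [Matrix.mul_apply, Matrix.one_apply] at h3
      rw [← h3]
      refine Finset.sum_congr rfl fun k _ => ?_
      rw [Matrix.star_apply, starRingEnd_apply, mul_comm]
    rw [Finset.prod_congr rfl fun i _ => h2 i, Fintype.prod_boole]
    by_cases hσ : σ = 1
    · subst hσ; simp; intro i; rfl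
    · rw [if_neg hσ, if_neg]
      intro hall
      apply hσ
      ext i
      have := Fin.castLE_injective hnm (hall i)
      have h4 : σ.symm i = i := this.symm
      have h5 : σ i = i := by
        calc σ i = σ (σ.symm i) := by rw [h4]
          _ = i := σ.apply_symm_apply i
      simp [h5]
  rw [step5, Finset.sum_congr rfl fun σ _ => key σ, Finset.sum_ite_eq' Finset.univ 1 (fun _ => 1)]
  simp
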